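/- Let d, m, n be positive natural numbers and let A be an m×n row-stochastic real matrix with a quantum implementation in dimension d. Suppose A is incompressible (every row-stochastic matrix ultraweakly equivalent to A has at least m rows and at least n columns) and λmax(A) = d. Let L be an (m+1)×m row-stochastic matrix and R an n×n row-stochastic matrix, and set B = L·A·R. If λmax(B) = d, then R is a permutation matrix. -/

import Mathlib

open Matrix BigOperators
open scoped ComplexOrder

/-- A real matrix is row-stochastic if all entries are nonnegative
and each row sums to 1. -/
def RowStochastic {m n : ℕ} (A : Matrix (Fin m) (Fin n) ℝ) : Prop :=
  (∀ i j, 0 ≤ A i j) ∧ ∀ i, ∑ j, A i j = 1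

/-- `A` admits a quantum implementation in dimension `d`: there are states
`ρ i` (PSD, trace one) and POVM effects `M j` (PSD, summing to the identity)
with `A i j = Re (tr (ρ i * M j))`. -/
def QuantumImpl (d m n : ℕ) (A : Matrix (Fin m) (Fin n) ℝ) : Prop :=
  ∃ (ρ : Fin m → Matrix (Fin d) (Fin d) ℂ) (M : Fin n → Matrix (Fin d) (Fin d) ℂ),
    (∀ i, (ρ i).PosSemidef ∧ (ρ i).trace = 1) ∧
    (∀ j, (M j).PosSemidef) ∧ (∑ j, M j = 1) ∧
    (∀ i j, A i j = ((ρ i * M j).trace).re)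

/-- The max monotone `λmax(A) = Σ_j max_i A i j`. -/
noncomputable def lmax {m n : ℕ} (A : Matrix (Fin m) (Fin n) ℝ) : ℝ :=
  ∑ j, ⨆ i, A i j

/-- The min monotone `λmin(A) = −Σ_j min_i A i j`. -/
noncomputable def lmin {m n : ℕ} (A : Matrix (Fin m) (Fin n) ℝ) : ℝ :=
  - ∑ j, ⨅ i, A i j

/-- `UWMaj B A` : `B` is ultraweakly majorized by `A` (i.e. `B ⪯ A`),
meaning `B = L * A * R` for some row-stochastic `L`, `R`. -/
def UWMaj {m' n' m n : ℕ} (B : Matrix (Fin m') (Fin n') ℝ)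
    (A : Matrix (Fin m) (Fin n) ℝ) : Prop :=
  ∃ (L : Matrix (Fin m') (Fin m) ℝ) (R : Matrix (Fin n) (Fin n') ℝ),
    RowStochastic L ∧ RowStochastic R ∧ L * A * R = B

/-- `A` is incompressible: every row-stochastic matrix ultraweakly equivalent
to `A` has at least as many rows and at least as many columns as `A`. -/
def Incompressible {m n : ℕ} (A : Matrix (Fin m) (Fin n) ℝ) : Prop :=
  ∀ (m' n' : ℕ) (A' : Matrix (Fin m') (Fin n') ℝ),
    RowStochastic A' → UWMaj A' A → UWMaj A A' → m ≤ m' ∧ n ≤ n'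

/-- if `A` is incompressible with a dimension-`d` quantum
implementation and `λmax(A) = d`, and `B = L·A·R` (with `L` of size
`(m+1)×m` and `R` of size `n×n`) also has `λmax(B) = d`, then `R` is a
permutation matrix. -/

lemma psd_diag_re_nonneg {d : ℕ} {N : Matrix (Fin d) (Fin d) ℂ} (hN : N.PosSemidef) (i : Fin d) :
    0 ≤ (N i i).re := by
  have h := hN.re_dotProduct_nonneg (Pi.single i 1)
  have e : star (Pi.single i 1 : Fin d → ℂ) ⬝ᵥ (N *ᵥ Pi.single i 1) = N i i := by
    simp [dotProduct, Matrix.mulVec, Pi.single_apply, Pi.star_apply, apply_ite, mul_ite, ite_mul,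
      mul_zero, zero_mul, mul_one, one_mul, Finset.sum_ite_eq, Finset.sum_ite_eq']
  rw [e] at h; exact h

lemma psd_row_eq_zero {d : ℕ} {N : Matrix (Fin d) (Fin d) ℂ} (hN : N.PosSemidef)
    {i : Fin d} (h : (N i i).re = 0) (j : Fin d) : N i j = 0 := by
  obtain ⟨B, rfl⟩ : ∃ B : Matrix (Fin d) (Fin d) ℂ, N = Bᴴ * B := by
    open scoped MatrixOrder in
    obtain ⟨B, hB⟩ := CStarAlgebra.nonneg_iff_eq_star_mul_self.mp hN.nonneg
    exact ⟨B, by rw [hB, Matrix.star_eq_conjTranspose]⟩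
  have h1 : (Bᴴ * B) i i = ((∑ k, Complex.normSq (B k i) : ℝ) : ℂ) := by
    rw [Matrix.mul_apply]
    push_cast
    exact Finset.sum_congr rfl fun k _ => by
      rw [Matrix.conjTranspose_apply, Complex.star_def, ← Complex.normSq_eq_conj_mul_self]
  rw [h1, Complex.ofReal_re] at h
  have hcol : ∀ k, B k i = 0 := fun k => Complex.normSq_eq_zero.mp <|
    (Finset.sum_eq_zero_iff_of_nonneg (fun k _ => Complex.normSq_nonneg _)).mp h k (Finset.mem_univ k)
  rw [Matrix.mul_apply]
  exact Finset.sum_eq_zero fun k _ => by rw [Matrix.conjTranspose_apply, hcol, star_zero, zero_mul]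

lemma quantum_key {d : ℕ} {ρ M : Matrix (Fin d) (Fin d) ℂ}
    (hρ : ρ.PosSemidef) (htr : ρ.trace = 1) (hM : M.PosSemidef) :
    ((ρ * M).trace).re ≤ (M.trace).re ∧
      (((ρ * M).trace).re = (M.trace).re → M = M.trace • ρ) := by
  classical
  set U : Matrix (Fin d) (Fin d) ℂ := (hρ.1.eigenvectorUnitary : Matrix (Fin d) (Fin d) ℂ) with hU
  have hU1 : U * star U = 1 := Matrix.mem_unitaryGroup_iff.mp hρ.1.eigenvectorUnitary.2
  have hU2 : star U * U = 1 := Matrix.mem_unitaryGroup_iff'.mp hρ.1.eigenvectorUnitary.2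
  set ev : Fin d → ℝ := hρ.1.eigenvalues with hev
  set D : Matrix (Fin d) (Fin d) ℂ := Matrix.diagonal (RCLike.ofReal ∘ ev) with hD
  have hspec : ρ = U * D * star U := hρ.1.spectral_theorem
  set N : Matrix (Fin d) (Fin d) ℂ := star U * M * U with hNdef
  have hN : N.PosSemidef := by
    have := hM.conjTranspose_mul_mul_same U
    simpa [hNdef, Matrix.star_eq_conjTranspose] using this
  have hMN : M = U * N * star U := by
    rw [hNdef, show U * (star U * M * U) * star U = (U * star U) * M * (U * star U) by
      simp only [Matrix.mul_assoc], hU1, Matrix.one_mul, Matrix.mul_one]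
  have htrN : N.trace = M.trace := by
    calc N.trace = (U * (star U * M)).trace := by
          rw [hNdef, Matrix.trace_mul_comm]
      _ = ((U * star U) * M).trace := by rw [Matrix.mul_assoc]
      _ = M.trace := by rw [hU1, Matrix.one_mul]
  have htrDN : (ρ * M).trace = (D * N).trace := by
    calc (ρ * M).trace = (U * (D * (star U * M))).trace := by
          rw [hspec]; simp only [Matrix.mul_assoc]
      _ = ((D * (star U * M)) * U).trace := Matrix.trace_mul_comm _ _
      _ = (D * N).trace := by rw [hNdef]; simp only [Matrix.mul_assoc]
  have hevnn : ∀ i, 0 ≤ ev i := fun i => hρ.eigenvalues_nonneg i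
  have htrρD : ρ.trace = D.trace := by
    calc ρ.trace = (U * (D * star U)).trace := by rw [hspec]; simp only [Matrix.mul_assoc]
      _ = ((D * star U) * U).trace := Matrix.trace_mul_comm _ _
      _ = (D * (star U * U)).trace := by simp only [Matrix.mul_assoc]
      _ = D.trace := by rw [hU2, Matrix.mul_one]
  have hsum : ∑ i, ev i = 1 := by
    have h1 : D.trace = ((∑ i, ev i : ℝ) : ℂ) := by
      rw [hD, Matrix.trace_diagonal]; push_cast; rfl
    rw [← htrρD, htr] at h1
    exact_mod_cast h1.symm
  have hle1 : ∀ i, ev i ≤ 1 := fun i =>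
    hsum ▸ Finset.single_le_sum (fun j _ => hevnn j) (Finset.mem_univ i)
  have hdiagDN : ∀ i, (D * N) i i = (ev i : ℂ) * N i i := by
    intro i
    rw [Matrix.mul_apply]
    simp [hD, Matrix.diagonal_apply, ite_mul, zero_mul, Finset.sum_ite_eq]
  have hreDN : ((ρ * M).trace).re = ∑ i, ev i * (N i i).re := by
    rw [htrDN, Matrix.trace, Complex.re_sum]
    exact Finset.sum_congr rfl fun i _ => by
      rw [Matrix.diag, hdiagDN i]
      simp [Complex.mul_re]
  have hreM : (M.trace).re = ∑ i, (N i i).re := by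
    rw [← htrN, Matrix.trace, Complex.re_sum]; rfl
  have hdnn : ∀ i, 0 ≤ (N i i).re := psd_diag_re_nonneg hN
  constructor
  · rw [hreDN, hreM]
    exact Finset.sum_le_sum fun i _ => mul_le_of_le_one_left (hdnn i) (hle1 i)
  · intro heq
    rw [hreDN, hreM] at heq
    have hall : ∀ i, ev i * (N i i).re = (N i i).re := fun i =>
      (Finset.sum_eq_sum_iff_of_le (fun i _ =>
        mul_le_of_le_one_left (hdnn i) (hle1 i))).mp heq i (Finset.mem_univ i)
    by_cases hM0 : M = 0
    · rw [hM0]; simp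
    · have hN0 : ∃ i j, N i j ≠ 0 := by
        by_contra h
        push_neg at h
        exact hM0 (by rw [hMN, show N = 0 from Matrix.ext fun i j => h i j]; simp)
      obtain ⟨i₀, j₀, hij₀⟩ := hN0
      have hr0 : (N i₀ i₀).re ≠ 0 := fun h => hij₀ (psd_row_eq_zero hN h j₀)
      have hev1 : ev i₀ = 1 := by
        have h2 : (ev i₀ - 1) * (N i₀ i₀).re = 0 := by
          rw [sub_mul, one_mul, hall i₀, sub_self]
        rcases mul_eq_zero.mp h2 with h3 | h3
        · linarith
        · exact absurd h3 hr0
      have hothers : ∀ i, i ≠ i₀ → ev i = 0 := by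
        have hsplit : ev i₀ + ∑ i ∈ Finset.univ.erase i₀, ev i = 1 := by
          rw [Finset.add_sum_erase _ _ (Finset.mem_univ i₀)]; exact hsum
        rw [hev1] at hsplit
        have hz : ∑ i ∈ Finset.univ.erase i₀, ev i = 0 := by linarith
        intro i hi
        exact (Finset.sum_eq_zero_iff_of_nonneg (fun j _ => hevnn j)).mp hz i
          (Finset.mem_erase.mpr ⟨hi, Finset.mem_univ i⟩)
      have hrowz : ∀ i, i ≠ i₀ → ∀ j, N i j = 0 := by
        intro i hi j
        refine psd_row_eq_zero hN ?_ j
        have := hall i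
        rw [hothers i hi, zero_mul] at this
        exact this.symm
      have htrNi : N.trace = N i₀ i₀ := by
        rw [Matrix.trace]
        exact Finset.sum_eq_single i₀ (fun b _ hb => hrowz b hb b)
          (fun h => absurd (Finset.mem_univ _) h)
      have hNT : N = N.trace • D := by
        ext i j
        by_cases hi : i = i₀
        · by_cases hj : j = i₀
          · rw [hi, hj, Matrix.smul_apply, hD, Matrix.diagonal_apply_eq, Function.comp_apply,
              hev1, htrNi]
            simp
          · have h1 : N j i = 0 := by rw [hi]; exact hrowz j hj i₀
            have h2 : N i j = 0 := by rw [← hN.1.apply i j, h1, star_zero]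
            have hij : i ≠ j := fun h => hj (h ▸ hi)
            rw [h2, Matrix.smul_apply, hD, Matrix.diagonal_apply_ne _ hij, smul_zero]
        · rw [hrowz i hi j, Matrix.smul_apply]
          by_cases hij : i = j
          · rw [← hij, hD, Matrix.diagonal_apply_eq, Function.comp_apply, hothers i hi]
            simp
          · rw [hD, Matrix.diagonal_apply_ne _ hij, smul_zero]
      calc M = U * N * star U := hMN
        _ = U * (N.trace • D) * star U := by rw [← hNT]
        _ = N.trace • (U * D * star U) := by rw [Matrix.mul_smul, Matrix.smul_mul]
        _ = M.trace • ρ := by rw [htrN, ← hspec]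

lemma rs_one {a : ℕ} : RowStochastic (1 : Matrix (Fin a) (Fin a) ℝ) := by
  constructor
  · intro i j
    rw [Matrix.one_apply]
    split <;> norm_num
  · intro i
    simp [Matrix.one_apply]

lemma rs_mul {a b c : ℕ} {P : Matrix (Fin a) (Fin b) ℝ} {Q : Matrix (Fin b) (Fin c) ℝ}
    (hP : RowStochastic P) (hQ : RowStochastic Q) : RowStochastic (P * Q) := by
  constructor
  · intro i j
    rw [Matrix.mul_apply]
    exact Finset.sum_nonneg fun k _ => mul_nonneg (hP.1 i k) (hQ.1 k j)
  · intro i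
    simp_rw [Matrix.mul_apply]
    rw [Finset.sum_comm]
    calc ∑ k, ∑ j, P i k * Q k j = ∑ k, P i k * ∑ j, Q k j := by
          simp_rw [Finset.mul_sum]
      _ = ∑ k, P i k := by simp_rw [hQ.2]; simp
      _ = 1 := hP.2 i

lemma compress_contra {m n : ℕ} (hm : 0 < m) (A : Matrix (Fin m) (Fin n) ℝ)
    (hA : RowStochastic A) (hinc : Incompressible A)
    {k k' : Fin n} (hkk : k ≠ k') {t : ℝ} (ht : 0 ≤ t)
    (hcol : ∀ i, A i k' = t * A i k) : False := by
  classical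
  obtain ⟨nn, rfl⟩ : ∃ nn, n = nn + 1 := ⟨n - 1, by have := k.pos; omega⟩
  set ι : Fin nn → Fin (nn + 1) := k'.succAbove with hι
  have hιinj : Function.Injective ι := Fin.succAbove_right_injective
  have hιne : ∀ j₁, ι j₁ ≠ k' := fun j₁ => Fin.succAbove_ne k' j₁
  obtain ⟨j₀, hj₀⟩ : ∃ j₀, ι j₀ = k := Fin.exists_succAbove_eq hkk
  have hsum1 : ∀ (x : Fin (nn + 1)) (jx : Fin nn) (c : Fin nn → ℝ), ι jx = x →
      ∑ j₁, (if ι j₁ = x then c j₁ else 0) = c jx := by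
    intro x jx c hjx
    rw [← hjx]
    simp [hιinj.eq_iff]
  set α : ℝ := 1 / (1 + t) with hα
  have ht1 : (0 : ℝ) < 1 + t := by linarith
  have hα0 : 0 < α := by positivity
  have hα1 : α ≤ 1 := by rw [hα, div_le_one ht1]; linarith
  have hαt : α * (1 + t) = 1 := by rw [hα, one_div_mul_cancel ht1.ne']
  set R1 : Matrix (Fin (nn + 1)) (Fin nn) ℝ :=
    fun j j₁ => if ι j₁ = (if j = k' then k else j) then 1 else 0 with hR1
  set E : Matrix (Fin nn) (Fin (nn + 1)) ℝ := fun j₁ j =>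
    if ι j₁ = k then (if j = k then α else if j = k' then 1 - α else 0)
    else (if j = ι j₁ then 1 else 0) with hE
  have hR1S : RowStochastic R1 := by
    constructor
    · intro j j₁
      simp only [hR1]
      split_ifs <;> norm_num
    · intro j
      by_cases hj : j = k'
      · have := hsum1 k j₀ (fun _ => (1 : ℝ)) hj₀
        simpa [hR1, hj] using this
      · obtain ⟨jj, hjj⟩ := Fin.exists_succAbove_eq (Ne.symm (Ne.symm hj))
        have := hsum1 j jj (fun _ => (1 : ℝ)) hjj
        simpa [hR1, hj] using this
  have hES : RowStochastic E := by
    constructor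
    · intro j₁ j
      simp only [hE]
      split_ifs <;> linarith
    · intro j₁
      by_cases hj₁ : ι j₁ = k
      · have hpt : ∀ j, E j₁ j = (if j = k then α else 0) + (if j = k' then 1 - α else 0) := by
          intro j
          simp only [hE, if_pos hj₁]
          by_cases h1 : j = k
          · simp [h1, hkk]
          · by_cases h2 : j = k' <;> simp [h1, h2, Ne.symm hkk]
        rw [Finset.sum_congr rfl fun j _ => hpt j, Finset.sum_add_distrib]
        simp [Finset.sum_ite_eq']
      · have hpt : ∀ j, E j₁ j = if j = ι j₁ then 1 else 0 := fun j => by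
          simp only [hE, if_neg hj₁]
        rw [Finset.sum_congr rfl fun j _ => hpt j]
        simp [Finset.sum_ite_eq']
  have hA'row : ∀ i j₁, (A * R1) i j₁ = if ι j₁ = k then (1 + t) * A i k else A i (ι j₁) := by
    intro i j₁
    rw [Matrix.mul_apply]
    by_cases hj₁ : ι j₁ = k
    · rw [if_pos hj₁]
      have hpt : ∀ j, A i j * R1 j j₁ =
          (if j = k then A i k else 0) + (if j = k' then A i k' else 0) := by
        intro j
        simp only [hR1]
        by_cases h2 : j = k'
        · simp [h2, hj₁, Ne.symm hkk]
        · rw [if_neg h2, hj₁]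
          by_cases h3 : j = k
          · simp [h3, h2, hkk]
          · simp [h3, h2, Ne.symm h3]
      rw [Finset.sum_congr rfl fun j _ => hpt j, Finset.sum_add_distrib]
      simp only [Finset.sum_ite_eq', Finset.mem_univ, if_pos]
      rw [hcol i]; ring
    · rw [if_neg hj₁]
      have hpt : ∀ j, A i j * R1 j j₁ = if j = ι j₁ then A i j else 0 := by
        intro j
        simp only [hR1]
        by_cases h2 : j = k'
        · simp [h2, hj₁, Ne.symm (hιne j₁)]
        · rw [if_neg h2]
          by_cases h3 : ι j₁ = j
          · simp [h3]
          · rw [if_neg h3, mul_zero, if_neg (fun h : j = ι j₁ => h3 h.symm)]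
      rw [Finset.sum_congr rfl fun j _ => hpt j]
      simp [Finset.sum_ite_eq']
  have hprod : (A * R1) * E = A := by
    ext i j
    rw [Matrix.mul_apply]
    by_cases h1 : j = k
    · have hpt : ∀ j₁, (A * R1) i j₁ * E j₁ j =
          if j₁ = j₀ then ((1 + t) * A i k) * α else 0 := by
        intro j₁
        by_cases h2 : ι j₁ = k
        · have hj₁ : j₁ = j₀ := hιinj (h2.trans hj₀.symm)
          rw [hA'row, if_pos h2, if_pos hj₁]
          simp [hE, h2, h1]
        · rw [hA'row, if_neg h2]
          have hne : j₁ ≠ j₀ := fun h => h2 (h ▸ hj₀)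
          simp only [hE, if_neg h2, if_neg hne, h1]
          rw [if_neg (fun h : k = ι j₁ => h2 h.symm), mul_zero]
      rw [Finset.sum_congr rfl fun j₁ _ => hpt j₁]
      simp only [Finset.sum_ite_eq', Finset.mem_univ, if_pos, h1]
      rw [show (1 + t) * A i k * α = (α * (1 + t)) * A i k by ring, hαt, one_mul]
    · by_cases h2 : j = k'
      · have hpt : ∀ j₁, (A * R1) i j₁ * E j₁ j =
            if j₁ = j₀ then ((1 + t) * A i k) * (1 - α) else 0 := by
          intro j₁
          by_cases h3 : ι j₁ = k
          · have hj₁ : j₁ = j₀ := hιinj (h3.trans hj₀.symm)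
            rw [hA'row, if_pos h3, if_pos hj₁]
            simp [hE, h3, h2, Ne.symm hkk]
          · rw [hA'row, if_neg h3]
            have hne : j₁ ≠ j₀ := fun h => h3 (h ▸ hj₀)
            simp only [hE, if_neg h3, if_neg hne, h2]
            rw [if_neg (fun h : k' = ι j₁ => hιne j₁ h.symm), mul_zero]
        rw [Finset.sum_congr rfl fun j₁ _ => hpt j₁]
        simp only [Finset.sum_ite_eq', Finset.mem_univ, if_pos, h2]
        rw [show (1 + t) * A i k * (1 - α) = ((1 + t) - α * (1 + t)) * A i k by ring, hαt,
          hcol i]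
        ring
      · obtain ⟨jj, hjj⟩ : ∃ jj, ι jj = j := Fin.exists_succAbove_eq (show j ≠ k' from h2)
        have hιjjk : ι jj ≠ k := fun h => h1 (by rw [← hjj, h])
        have hpt : ∀ j₁, (A * R1) i j₁ * E j₁ j = if j₁ = jj then A i j else 0 := by
          intro j₁
          by_cases h3 : j₁ = jj
          · rw [h3, hA'row, if_neg hιjjk, if_pos rfl]
            simp only [hE]
            rw [if_neg hιjjk, if_pos hjj.symm, mul_one, hjj]
          · rw [if_neg h3]
            by_cases h4 : ι j₁ = k
            · simp only [hE, if_pos h4, if_neg h1, if_neg h2, mul_zero]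
            · simp only [hE, if_neg h4]
              have h5 : ¬(j = ι j₁) := fun h => h3 (hιinj (by rw [hjj, ← h]))
              rw [if_neg h5, mul_zero]
        rw [Finset.sum_congr rfl fun j₁ _ => hpt j₁]
        simp [Finset.sum_ite_eq']
  have hUW1 : UWMaj (A * R1) A := ⟨1, R1, rs_one, hR1S, by rw [Matrix.one_mul]⟩
  have hUW2 : UWMaj A (A * R1) := ⟨1, E, rs_one, hES, by rw [Matrix.one_mul, hprod]⟩
  have := (hinc m nn (A * R1) (rs_mul hA hR1S) hUW1 hUW2).2
  omega

theorem postprocessing_is_permutation (d m n : ℕ) (hd : 0 < d) (hm : 0 < m) (hn : 0 < n)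
    (A : Matrix (Fin m) (Fin n) ℝ) (hA : RowStochastic A)
    (hQ : QuantumImpl d m n A)
    (hinc : Incompressible A) (hlmaxA : lmax A = d)
    (L : Matrix (Fin (m + 1)) (Fin m) ℝ) (hL : RowStochastic L)
    (R : Matrix (Fin n) (Fin n) ℝ) (hR : RowStochastic R)
    (B : Matrix (Fin (m + 1)) (Fin n) ℝ) (hB : B = L * A * R)
    (hlmaxB : lmax B = d) :
    ∃ σ : Equiv.Perm (Fin n), ∀ i j, R i j = if σ i = j then 1 else 0 := by
  classical
  obtain ⟨ρ, M, hρ, hMpsd, hMsum, hAij⟩ := hQ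
  haveI : Nonempty (Fin m) := ⟨⟨0, hm⟩⟩
  haveI : Nonempty (Fin n) := ⟨⟨0, hn⟩⟩
  set c : Fin n → ℝ := fun j => ⨆ i, A i j with hc
  have hbdd : ∀ f : Fin m → ℝ, BddAbove (Set.range f) := fun f =>
    Set.Finite.bddAbove (Set.finite_range f)
  have hAle : ∀ i j, A i j ≤ c j := fun i j => le_ciSup (f := fun i => A i j) (hbdd _) i
  have hc0 : ∀ j, 0 ≤ c j := fun j => le_trans (hA.1 ⟨0, hm⟩ j) (hAle _ j)
  have hqle : ∀ i j, A i j ≤ ((M j).trace).re := by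
    intro i j
    rw [hAij]
    exact (quantum_key (hρ i).1 (hρ i).2 (hMpsd j)).1
  have hcle : ∀ j, c j ≤ ((M j).trace).re := fun j => ciSup_le fun i => hqle i j
  have htrsum : ∑ j, ((M j).trace).re = (d : ℝ) := by
    rw [← Complex.re_sum]
    have h1 : ∑ j, (M j).trace = (d : ℂ) := by
      rw [← Matrix.trace_sum, hMsum]
      simp
    rw [h1]
    simp
  have hlmaxAc : ∑ j, c j = (d : ℝ) := hlmaxA
  have hceq : ∀ j, c j = ((M j).trace).re := by
    have := (Finset.sum_eq_sum_iff_of_le fun j _ => hcle j).mp (by rw [hlmaxAc, htrsum])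
    exact fun j => this j (Finset.mem_univ j)
  set C : Matrix (Fin m) (Fin n) ℝ := A * R with hCdef
  have hCapp : ∀ i j, C i j = ∑ k, A i k * R k j := fun i j => by
    rw [hCdef, Matrix.mul_apply]
  have hCle : ∀ j, (⨆ i, C i j) ≤ ∑ k, c k * R k j := by
    intro j
    refine ciSup_le fun i => ?_
    rw [hCapp]
    exact Finset.sum_le_sum fun k _ => mul_le_mul_of_nonneg_right (hAle i k) (hR.1 k j)
  have hsumRT : ∑ j, ∑ k, c k * R k j = ∑ k, c k := by
    rw [Finset.sum_comm]
    calc ∑ k, ∑ j, c k * R k j = ∑ k, c k * ∑ j, R k j := by simp_rw [Finset.mul_sum]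
      _ = ∑ k, c k := by simp_rw [hR.2]; simp
  have hlmaxBle : (d : ℝ) ≤ ∑ j, ⨆ i, C i j := by
    rw [← hlmaxB]
    show ∑ j, ⨆ i, B i j ≤ _
    refine Finset.sum_le_sum fun j _ => ?_
    refine ciSup_le fun i => ?_
    have hBC : B = L * C := by rw [hB, hCdef, Matrix.mul_assoc]
    rw [hBC, Matrix.mul_apply]
    calc ∑ k, L i k * C k j ≤ ∑ k, L i k * (⨆ i', C i' j) :=
          Finset.sum_le_sum fun k _ => mul_le_mul_of_nonneg_left (le_ciSup (f := fun i' => C i' j) (hbdd _) k) (hL.1 i k)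
      _ = ⨆ i', C i' j := by rw [← Finset.sum_mul, hL.2 i, one_mul]
  have hcol_eq : ∀ j, (⨆ i, C i j) = ∑ k, c k * R k j := by
    have heq : ∑ j, ⨆ i, C i j = ∑ j, ∑ k, c k * R k j := by
      have h2 : ∑ j, ∑ k, c k * R k j = (d : ℝ) := by rw [hsumRT, hlmaxAc]
      have h3 : ∑ j, ⨆ i, C i j ≤ (d : ℝ) := by
        rw [← h2]; exact Finset.sum_le_sum fun j _ => hCle j
      linarith [hlmaxBle]
    exact fun j => (Finset.sum_eq_sum_iff_of_le fun j _ => hCle j).mp heq j (Finset.mem_univ j)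
  have hmax : ∀ j : Fin n, ∃ i, ∀ k, 0 < R k j → A i k = c k := by
    intro j
    obtain ⟨i, hi⟩ := exists_eq_ciSup_of_finite (f := fun i => C i j)
    refine ⟨i, fun k hk => ?_⟩
    have h1 : ∑ k, A i k * R k j = ∑ k, c k * R k j := by
      rw [← hCapp, hi, hcol_eq j]
    have h2 : ∑ k, (c k - A i k) * R k j = 0 := by
      simp only [sub_mul]
      rw [Finset.sum_sub_distrib, h1, sub_self]
    have h3 := (Finset.sum_eq_zero_iff_of_nonneg fun k _ =>
      mul_nonneg (sub_nonneg.mpr (hAle i k)) (hR.1 k j)).mp h2 k (Finset.mem_univ k)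
    rcases mul_eq_zero.mp h3 with h | h
    · linarith [sub_eq_zero.mp h]
    · exact absurd h (ne_of_gt hk)
  have hcol_single : ∀ (j k k' : Fin n), 0 < R k j → 0 < R k' j → k = k' := by
    intro j k k' hk hk'
    by_contra hne
    obtain ⟨i0, hi0⟩ := hmax j
    have hMk : M k = (M k).trace • ρ i0 := by
      refine (quantum_key (hρ i0).1 (hρ i0).2 (hMpsd k)).2 ?_
      rw [← hAij, hi0 k hk, hceq]
    have hMk' : M k' = (M k').trace • ρ i0 := by
      refine (quantum_key (hρ i0).1 (hρ i0).2 (hMpsd k')).2 ?_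
      rw [← hAij, hi0 k' hk', hceq]
    have htr_real : ∀ kk : Fin n, (M kk).trace = ((c kk : ℝ) : ℂ) := by
      intro kk
      have h1 : (starRingEnd ℂ) ((M kk).trace) = (M kk).trace := by
        have h2 := Matrix.trace_conjTranspose (M kk)
        rw [(hMpsd kk).1] at h2
        exact h2.symm
      rw [← Complex.conj_eq_iff_re.mp h1, hceq kk]
    have hAcol : ∀ i, A i k = c k * ((ρ i * ρ i0).trace).re ∧
        A i k' = c k' * ((ρ i * ρ i0).trace).re := by
      intro i
      constructor
      · rw [hAij i k, hMk, htr_real k, Matrix.mul_smul, Matrix.trace_smul]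
        simp [smul_eq_mul, Complex.mul_re]
      · rw [hAij i k', hMk', htr_real k', Matrix.mul_smul, Matrix.trace_smul]
        simp [smul_eq_mul, Complex.mul_re]
    rcases eq_or_lt_of_le (hc0 k) with h0 | h0
    · refine compress_contra hm A hA hinc (Ne.symm hne) (le_refl (0 : ℝ)) fun i => ?_
      rw [(hAcol i).1, ← h0]
      ring
    · refine compress_contra hm A hA hinc hne (div_nonneg (hc0 k') h0.le) fun i => ?_
      rw [(hAcol i).2, (hAcol i).1]
      field_simp
  have hrow : ∀ kk : Fin n, ∃ j, 0 < R kk j := by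
    intro kk
    by_contra h
    push_neg at h
    have h0 : ∑ j, R kk j = 0 :=
      Finset.sum_eq_zero fun j _ => le_antisymm (h j) (hR.1 kk j)
    rw [hR.2 kk] at h0
    norm_num at h0
  choose f hf using hrow
  have hinj : Function.Injective f := fun a b hab =>
    hcol_single (f a) a b (hf a) (hab ▸ hf b)
  have hbij : Function.Bijective f := Finite.injective_iff_bijective.mp hinj
  have hzero : ∀ i j, f i ≠ j → R i j = 0 := by
    intro i j hfij
    by_contra hne
    have hpos : 0 < R i j := lt_of_le_of_ne (hR.1 i j) (Ne.symm hne)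
    obtain ⟨i2, hi2⟩ := hbij.2 j
    have : i = i2 := hcol_single j i i2 hpos (hi2 ▸ hf i2)
    exact hfij (by rw [this, hi2])
  refine ⟨Equiv.ofBijective f hbij, fun i j => ?_⟩
  show R i j = if f i = j then 1 else 0
  by_cases hfij : f i = j
  · rw [if_pos hfij, ← hfij]
    have hss : ∑ jj, R i jj = R i (f i) :=
      Finset.sum_eq_single (f i) (fun b _ hb => hzero i b (Ne.symm hb))
        (fun h => absurd (Finset.mem_univ _) h)
    rw [← hss]
    exact hR.2 i
  · rw [if_neg hfij]
    exact hzero i j hfij
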